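/- Let a > 0, b < 10a, and let X be a random variable with P(a ≤ X ≤ b) = 1. Then there exists t ∈ [1,10) with P(S(|X|) ≤ t) ≠ log₁₀ t; in fact, there is a nonempty open subinterval (t₁, t₂) of [1,10) such that P(t₁ < S(|X|) ≤ t₂) = 0 while log₁₀ t₂ − log₁₀ t₁ > 0. -/

import Mathlib

open MeasureTheory

noncomputable def signif (x : ℝ) : ℝ :=
  if x = 0 then 0 else |x| * (10 : ℝ) ^ (-⌊Real.logb 10 |x|⌋)

lemma signif_eq_of_mem {x : ℝ} {k : ℤ} (h1 : (10:ℝ)^k ≤ x) (h2 : x < (10:ℝ)^(k+1)) :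
    signif x = x / 10^k := by
  have hx : 0 < x := lt_of_lt_of_le (zpow_pos (by norm_num) k) h1
  have hfloor : ⌊Real.logb 10 x⌋ = k := by
    rw [Int.floor_eq_iff]
    constructor
    · rw [Real.le_logb_iff_rpow_le (by norm_num) hx, Real.rpow_intCast]
      exact h1
    · rw [Real.logb_lt_iff_lt_rpow (by norm_num) hx]
      rw [show ((k:ℝ) + 1) = ((k+1 : ℤ) : ℝ) by push_cast; ring, Real.rpow_intCast]
      exact h2
  unfold signif
  rw [if_neg hx.ne', abs_of_pos hx, hfloor, zpow_neg, div_eq_mul_inv]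

lemma floor_logb_bounds {a : ℝ} (ha : 0 < a) :
    (10:ℝ)^⌊Real.logb 10 a⌋ ≤ a ∧ a < (10:ℝ)^(⌊Real.logb 10 a⌋ + 1) := by
  constructor
  · rw [← Real.rpow_intCast, ← Real.le_logb_iff_rpow_le (by norm_num) ha]
    exact Int.floor_le _
  · rw [← Real.rpow_intCast, ← Real.logb_lt_iff_lt_rpow (by norm_num) ha]
    push_cast
    exact Int.lt_floor_add_one _

/-- If `0 < a`, `b < 10a`, and `P(a ≤ X ≤ b) = 1`, then there is `t ∈ [1,10)`
with `P(S(|X|) ≤ t) ≠ log₁₀ t`; in fact there is a nonempty open subinterval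
`(t₁, t₂)` of `[1,10)` with `P(t₁ < S(|X|) ≤ t₂) = 0` while
`log₁₀ t₂ − log₁₀ t₁ > 0`. -/
theorem significand_gap_of_short_range
    {Ω : Type*} [MeasurableSpace Ω] (μ : Measure Ω) [IsProbabilityMeasure μ]
    (X : Ω → ℝ) (hX : Measurable X) (a b : ℝ) (ha : 0 < a) (hb : b < 10 * a)
    (hrange : μ {ω | a ≤ X ω ∧ X ω ≤ b} = 1) :
    (∃ t ∈ Set.Ico (1 : ℝ) 10,
        μ {ω | signif |X ω| ≤ t} ≠ ENNReal.ofReal (Real.logb 10 t)) ∧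
      ∃ t₁ t₂ : ℝ, 1 ≤ t₁ ∧ t₁ < t₂ ∧ t₂ ≤ 10 ∧
        μ {ω | t₁ < signif |X ω| ∧ signif |X ω| ≤ t₂} = 0 ∧
        0 < Real.logb 10 t₂ - Real.logb 10 t₁ := by
  set k := ⌊Real.logb 10 a⌋ with hk
  obtain ⟨hak, hak'⟩ := floor_logb_bounds ha
  have hten : (0:ℝ) < 10 := by norm_num
  have hpk : (0:ℝ) < (10:ℝ)^k := zpow_pos hten k
  have hpk1 : ((10:ℝ)^(k+1)) = 10 * (10:ℝ)^k := by
    rw [zpow_add_one₀ (by norm_num)]; ring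
  have hpk2 : ((10:ℝ)^(k+2)) = 10 * (10:ℝ)^(k+1) := by
    rw [show k+2 = (k+1)+1 by ring, zpow_add_one₀ (by norm_num)]; ring
  have hab : a ≤ b := by
    by_contra h
    have : {ω | a ≤ X ω ∧ X ω ≤ b} = ∅ := by
      ext ω; simp only [Set.mem_setOf_eq, Set.mem_empty_iff_false, iff_false]
      rintro ⟨h1, h2⟩; linarith
    rw [this, measure_empty] at hrange
    exact one_ne_zero hrange.symm
  have hAc : μ ({ω | a ≤ X ω ∧ X ω ≤ b}ᶜ) = 0 := by
    have hm : MeasurableSet {ω | a ≤ X ω ∧ X ω ≤ b} := by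
      have : {ω | a ≤ X ω ∧ X ω ≤ b} = X ⁻¹' Set.Icc a b := rfl
      rw [this]; exact hX measurableSet_Icc
    rw [measure_compl hm (measure_ne_top μ _), hrange, measure_univ, tsub_self]
  -- key: a gap with t₂ < 10
  have key : ∃ t₁ t₂ : ℝ, 1 ≤ t₁ ∧ t₁ < t₂ ∧ t₂ < 10 ∧
      μ {ω | t₁ < signif |X ω| ∧ signif |X ω| ≤ t₂} = 0 := by
    have gapzero : ∀ t₁ t₂ : ℝ,
        (∀ ω, a ≤ X ω → X ω ≤ b → ¬(t₁ < signif |X ω| ∧ signif |X ω| ≤ t₂)) →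
        μ {ω | t₁ < signif |X ω| ∧ signif |X ω| ≤ t₂} = 0 := by
      intro t₁ t₂ h
      refine le_antisymm (le_trans (measure_mono ?_) hAc.le) zero_le
      intro ω hω hω2
      exact h ω hω2.1 hω2.2 hω
    rcases lt_or_ge b ((10:ℝ)^(k+1)) with hcase | hcase
    · -- one decade: significands in [a/10^k, b/10^k]
      refine ⟨b / (10:ℝ)^k, (b / (10:ℝ)^k + 10)/2, ?_, ?_, ?_, ?_⟩
      · rw [le_div_iff₀ hpk, one_mul]; linarith
      · have : b / (10:ℝ)^k < 10 := by
          rw [div_lt_iff₀ hpk]; linarith [hpk1 ▸ hcase]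
        linarith
      · have : b / (10:ℝ)^k < 10 := by
          rw [div_lt_iff₀ hpk]; linarith [hpk1 ▸ hcase]
        linarith
      · refine gapzero _ _ (fun ω h1 h2 => ?_)
        have hxpos : 0 < X ω := lt_of_lt_of_le ha h1
        rw [abs_of_pos hxpos, signif_eq_of_mem (le_trans hak h1) (lt_of_le_of_lt h2 hcase)]
        rintro ⟨hgt, _⟩
        have : X ω / (10:ℝ)^k ≤ b / (10:ℝ)^k := by
          apply div_le_div_of_nonneg_right h2 hpk.le |>.trans_eq rfl
        linarith
    · -- two decades: gap between b/10^(k+1) and a/10^k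
      have hba : b / (10:ℝ)^(k+1) < a / (10:ℝ)^k := by
        rw [hpk1, div_lt_div_iff₀ (by positivity) hpk]
        nlinarith
      have ha10 : a / (10:ℝ)^k < 10 := by
        rw [div_lt_iff₀ hpk]; linarith [hpk1 ▸ hak']
      refine ⟨b / (10:ℝ)^(k+1), (b / (10:ℝ)^(k+1) + a / (10:ℝ)^k)/2, ?_, by linarith, by linarith, ?_⟩
      · rw [le_div_iff₀ (by positivity), one_mul]; exact hcase
      · refine gapzero _ _ (fun ω h1 h2 => ?_)
        have hxpos : 0 < X ω := lt_of_lt_of_le ha h1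
        rw [abs_of_pos hxpos]
        rcases lt_or_ge (X ω) ((10:ℝ)^(k+1)) with hx | hx
        · rw [signif_eq_of_mem (le_trans hak h1) hx]
          rintro ⟨_, hle⟩
          have : a / (10:ℝ)^k ≤ X ω / (10:ℝ)^k := div_le_div_of_nonneg_right h1 hpk.le
          linarith
        · have hxb : X ω < (10:ℝ)^(k+1+1) := by
            rw [show k+1+1 = k+2 by ring, hpk2]
            calc X ω ≤ b := h2
            _ < 10 * a := hb
            _ ≤ 10 * (10:ℝ)^(k+1) := by nlinarith [hpk1 ▸ hak']
          rw [signif_eq_of_mem hx hxb]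
          rintro ⟨hgt, _⟩
          have : X ω / (10:ℝ)^(k+1) ≤ b / (10:ℝ)^(k+1) :=
            div_le_div_of_nonneg_right h2 (by positivity)
          linarith
  obtain ⟨t₁, t₂, h1, h12, h210, hgap⟩ := key
  have hlogs : Real.logb 10 t₁ < Real.logb 10 t₂ :=
    Real.logb_lt_logb (by norm_num) (by linarith) h12
  have hlog1 : 0 ≤ Real.logb 10 t₁ :=
    Real.logb_nonneg (by norm_num) h1
  constructor
  · by_cases h : μ {ω | signif |X ω| ≤ t₁} = ENNReal.ofReal (Real.logb 10 t₁)
    · refine ⟨t₂, ⟨by linarith, h210⟩, ?_⟩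
      have hsplit : {ω | signif |X ω| ≤ t₂} =
          {ω | signif |X ω| ≤ t₁} ∪ {ω | t₁ < signif |X ω| ∧ signif |X ω| ≤ t₂} := by
        ext ω
        simp only [Set.mem_setOf_eq, Set.mem_union]
        constructor
        · intro hle
          rcases le_or_gt (signif |X ω|) t₁ with h' | h'
          · exact Or.inl h'
          · exact Or.inr ⟨h', hle⟩
        · rintro (h' | ⟨_, h'⟩)
          · linarith
          · exact h'
      have hμeq : μ {ω | signif |X ω| ≤ t₂} = μ {ω | signif |X ω| ≤ t₁} := by
        rw [hsplit]
        refine le_antisymm (le_trans (measure_union_le _ _) ?_) (measure_mono Set.subset_union_left)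
        rw [hgap, add_zero]
      rw [hμeq, h]
      exact ne_of_lt ((ENNReal.ofReal_lt_ofReal_iff (lt_of_le_of_lt hlog1 hlogs)).mpr hlogs)
    · exact ⟨t₁, ⟨h1, by linarith⟩, h⟩
  · exact ⟨t₁, t₂, h1, h12, le_of_lt h210, hgap, by linarith⟩
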